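/- Let f : [a,b] → ℝ be continuous on [a,b] and differentiable on (a,b). Let p ∈ (0,∞) and suppose that for a given x ∈ (a,b), M_p(x) := sup over u ∈ (a,b) of |x − u|^{1−p}·|f′(u)| is finite. Then |f(x) − (1/(b−a))·∫ₐᵇ f(t) dt| ≤ (1/(p(p+1)(b−a)))·[(x−a)^{p+1} + (b−x)^{p+1}]·M_p(x). -/

import Mathlib

open Set MeasureTheory intervalIntegral

/-- Auxiliary fencing lemma: if `|g'| ≤ M (d-s)^(p-1)` on `[c,d)`, then
`|g d - g c| ≤ M (d-c)^p / p`. -/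
lemma ostrowski_aux (c d p M : ℝ) (g g' : ℝ → ℝ) (hcd : c < d) (hp : 0 < p) (hM : 0 ≤ M)
    (hg : ContinuousOn g (Set.Icc c d))
    (hg' : ∀ s ∈ Set.Ico c d, HasDerivAt g (g' s) s)
    (hbound : ∀ s ∈ Set.Ico c d, |g' s| ≤ M * (d - s) ^ (p - 1)) :
    |g d - g c| ≤ M * (d - c) ^ p / p := by
  set B : ℝ → ℝ := fun s => M / p * ((d - c) ^ p - (d - s) ^ p) with hB
  set B' : ℝ → ℝ := fun s => M * (d - s) ^ (p - 1) with hB'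
  have hBcont : Continuous B := by
    apply continuous_const.mul
    exact continuous_const.sub
      ((continuous_const.sub continuous_id).rpow_const (fun s => Or.inr hp.le))
  have hBderiv : ∀ s ∈ Set.Ico c d, HasDerivWithinAt B (B' s) (Set.Ici s) s := by
    intro s hs
    have hds : (0:ℝ) < d - s := by simp only [Set.mem_Ico] at hs; linarith [hs.2]
    have h1 : HasDerivAt (fun s : ℝ => (d - s) ^ p)
        (p * (d - s) ^ (p - 1) * (-1)) s := by
      have := (Real.hasDerivAt_rpow_const (x := d - s) (p := p) (Or.inl hds.ne')).comp s
        ((hasDerivAt_id s).const_sub d)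
      simpa [Function.comp_def] using this
    have h2 : HasDerivAt B (M / p * (0 - p * (d - s) ^ (p - 1) * (-1))) s :=
      (hasDerivAt_const s ((d - c) ^ p) |>.sub h1).const_mul (M / p)
    have h3 : M / p * (0 - p * (d - s) ^ (p - 1) * (-1)) = B' s := by
      field_simp [hB']
      ring
    exact (h3 ▸ h2).hasDerivWithinAt
  have key := image_norm_le_of_norm_deriv_right_le_deriv_boundary'
    (f := fun s => g s - g c) (f' := g')
    (a := c) (b := d)
    (hg.sub continuousOn_const)
    (fun s hs => ((hg' s hs).sub_const (g c)).hasDerivWithinAt)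
    (by simp [hB])
    (hBcont.continuousOn)
    hBderiv
    (fun s hs => by simpa using hbound s hs)
  have := key (Set.right_mem_Icc.2 hcd.le)
  simp only [Real.norm_eq_abs, hB, sub_self] at this
  rw [Real.zero_rpow hp.ne'] at this
  calc |g d - g c| ≤ M / p * ((d - c) ^ p - 0) := this
    _ = M * (d - c) ^ p / p := by ring

theorem ostrowski_type_Mp (a b p : ℝ) (f : ℝ → ℝ)
    (hab : a < b) (hp : 0 < p)
    (hf : ContinuousOn f (Set.Icc a b))
    (hd : DifferentiableOn ℝ f (Set.Ioo a b))
    (x : ℝ) (hx : x ∈ Set.Ioo a b)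
    (hbdd : BddAbove ((fun u => |x - u| ^ (1 - p) * |deriv f u|) '' Set.Ioo a b)) :
    |f x - (1 / (b - a)) * ∫ t in a..b, f t| ≤
      1 / (p * (p + 1) * (b - a)) * ((x - a) ^ (p + 1) + (b - x) ^ (p + 1)) *
        sSup ((fun u => |x - u| ^ (1 - p) * |deriv f u|) '' Set.Ioo a b) := by
  obtain ⟨hax, hxb⟩ := hx
  set M : ℝ := sSup ((fun u => |x - u| ^ (1 - p) * |deriv f u|) '' Set.Ioo a b) with hM
  have hxI : x ∈ Set.Ioo a b := ⟨hax, hxb⟩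
  have hub : ∀ u ∈ Set.Ioo a b, |x - u| ^ (1 - p) * |deriv f u| ≤ M :=
    fun u hu => le_csSup hbdd ⟨u, hu, rfl⟩
  have hM0 : 0 ≤ M :=
    le_trans (mul_nonneg (Real.rpow_nonneg (abs_nonneg _) _) (abs_nonneg _)) (hub x hxI)
  -- pointwise derivative bound
  have hderiv_bound : ∀ u ∈ Set.Ioo a b, u ≠ x → |deriv f u| ≤ M * |x - u| ^ (p - 1) := by
    intro u hu hux
    · have hpos : (0:ℝ) < |x - u| := abs_pos.2 (sub_ne_zero.2 (Ne.symm hux))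
      have h1 : |x - u| ^ (p - 1) * (|x - u| ^ (1 - p) * |deriv f u|) = |deriv f u| := by
        rw [← mul_assoc, ← Real.rpow_add hpos]
        norm_num
      calc |deriv f u| = |x - u| ^ (p - 1) * (|x - u| ^ (1 - p) * |deriv f u|) := h1.symm
        _ ≤ |x - u| ^ (p - 1) * M :=
            mul_le_mul_of_nonneg_left (hub u hu) (Real.rpow_nonneg (abs_nonneg _) _)
        _ = M * |x - u| ^ (p - 1) := mul_comm _ _
  -- the key pointwise bound
  have key : ∀ t ∈ Set.Ioo a b, |f x - f t| ≤ M * |x - t| ^ p / p := by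
    intro t ht
    rcases lt_trichotomy t x with htx | rfl | hxt
    · have habs : |x - t| = x - t := abs_of_pos (by linarith)
      rw [habs]
      exact ostrowski_aux t x p M f (deriv f) htx hp hM0
        (hf.mono (Set.Icc_subset_Icc ht.1.le hxb.le))
        (fun s hs => ((hd s ⟨lt_of_lt_of_le ht.1 hs.1, hs.2.trans hxb⟩).differentiableAt
          (Ioo_mem_nhds (lt_of_lt_of_le ht.1 hs.1) (hs.2.trans hxb))).hasDerivAt)
        (fun s hs => by
          have hsI : s ∈ Set.Ioo a b := ⟨lt_of_lt_of_le ht.1 hs.1, hs.2.trans hxb⟩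
          have := hderiv_bound s hsI (by linarith [hs.2] : s ≠ x)
          rwa [abs_of_pos (by linarith [hs.2] : (0:ℝ) < x - s)] at this)
    · simp [Real.zero_rpow hp.ne', div_nonneg (mul_nonneg hM0 (le_refl 0)) hp.le,
        abs_nonneg]
    · have habs : |x - t| = t - x := by rw [abs_of_neg (by linarith)]; ring
      rw [habs]
      have := ostrowski_aux x t p M (fun s => f (x + t - s)) (fun s => -deriv f (x + t - s))
        hxt hp hM0
        (hf.comp (continuous_const.sub continuous_id).continuousOn
          (fun s hs => by
            rw [Set.mem_Icc] at hs ⊢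
            constructor <;> linarith [hax, ht.2, hs.1, hs.2]))
        (fun s hs => by
          have huI : x + t - s ∈ Set.Ioo a b := by
            simp only [Set.mem_Ico] at hs
            constructor <;> [linarith [hax]; linarith [ht.2]]
          have h1 : HasDerivAt f (deriv f (x + t - s)) (x + t - s) :=
            ((hd _ huI).differentiableAt (Ioo_mem_nhds huI.1 huI.2)).hasDerivAt
          have := h1.comp s ((hasDerivAt_id s).const_sub (x + t))
          simpa [Function.comp_def] using this)
        (fun s hs => by
          have huI : x + t - s ∈ Set.Ioo a b := by
            simp only [Set.mem_Ico] at hs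
            constructor <;> [linarith [hax]; linarith [ht.2]]
          have hb := hderiv_bound _ huI (by
            simp only [Set.mem_Ico] at hs
            intro h
            have : s = t := by linarith [congrArg (fun y => y - x) h]
            linarith [hs.2])
          have habs2 : |x - (x + t - s)| = t - s := by
            rw [abs_of_nonpos (by simp only [Set.mem_Ico] at hs; linarith [hs.2])]; ring
          rw [habs2] at hb
          simpa using hb)
      simpa using this
  -- integrability facts
  have hcont_g : Continuous (fun t : ℝ => |x - t| ^ p) :=
    (continuous_const.sub continuous_id).abs.rpow_const (fun t => Or.inr hp.le)
  have hInt_f : IntervalIntegrable f volume a b := hf.intervalIntegrable_of_Icc hab.le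
  have hInt_abs : IntervalIntegrable (fun t => |f x - f t|) volume a b :=
    ((continuousOn_const.sub hf).abs).intervalIntegrable_of_Icc hab.le
  have hInt_g : IntervalIntegrable (fun t => M * |x - t| ^ p / p) volume a b :=
    (((continuous_const.mul hcont_g).div_const p)).intervalIntegrable _ _
  -- compute ∫ |x-t|^p
  have hI1 : (∫ t in a..x, |x - t| ^ p) = (x - a) ^ (p + 1) / (p + 1) := by
    have hcongr : (∫ t in a..x, |x - t| ^ p) = ∫ t in a..x, (x - t) ^ p := by
      apply intervalIntegral.integral_congr
      intro t ht
      rw [Set.uIcc_of_le hax.le] at ht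
      show |x - t| ^ p = (x - t) ^ p
      rw [abs_of_nonneg (by linarith [ht.2])]
    rw [hcongr, intervalIntegral.integral_comp_sub_left (fun s => s ^ p) x]
    rw [integral_rpow (Or.inl (by linarith))]
    rw [sub_self, Real.zero_rpow (by positivity)]
    ring
  have hI2 : (∫ t in x..b, |x - t| ^ p) = (b - x) ^ (p + 1) / (p + 1) := by
    have hcongr : (∫ t in x..b, |x - t| ^ p) = ∫ t in x..b, (t - x) ^ p := by
      apply intervalIntegral.integral_congr
      intro t ht
      rw [Set.uIcc_of_le hxb.le] at ht
      show |x - t| ^ p = (t - x) ^ p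
      rw [abs_of_nonpos (by linarith [ht.1])]
      ring_nf
    rw [hcongr, intervalIntegral.integral_comp_sub_right (fun s => s ^ p) x]
    rw [integral_rpow (Or.inl (by linarith))]
    rw [sub_self, Real.zero_rpow (by positivity)]
    ring
  have hIab : (∫ t in a..b, |x - t| ^ p)
      = ((x - a) ^ (p + 1) + (b - x) ^ (p + 1)) / (p + 1) := by
    rw [← intervalIntegral.integral_add_adjacent_intervals
      (hcont_g.intervalIntegrable a x) (hcont_g.intervalIntegrable x b), hI1, hI2]
    ring
  -- rewrite the LHS
  have hba : (0:ℝ) < b - a := by linarith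
  have e1 : f x - (1 / (b - a)) * ∫ t in a..b, f t
      = (1 / (b - a)) * ∫ t in a..b, (f x - f t) := by
    rw [intervalIntegral.integral_sub (intervalIntegrable_const) hInt_f,
      intervalIntegral.integral_const, smul_eq_mul]
    field_simp
  rw [e1, abs_mul, abs_of_pos (by positivity : (0:ℝ) < 1 / (b - a))]
  -- a.e. bound
  have hae : (fun t => |f x - f t|) ≤ᵐ[volume.restrict (Set.Icc a b)]
      (fun t => M * |x - t| ^ p / p) := by
    have hne : ∀ᵐ t : ℝ ∂(volume.restrict (Set.Icc a b)), t ≠ a ∧ t ≠ b := by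
      apply ae_restrict_of_ae
      have h1 : ∀ᵐ t : ℝ, t ≠ a := by
        rw [MeasureTheory.ae_iff]
        simpa using Real.volume_singleton (a := a)
      have h2 : ∀ᵐ t : ℝ, t ≠ b := by
        rw [MeasureTheory.ae_iff]
        simpa using Real.volume_singleton (a := b)
      filter_upwards [h1, h2] with t ht1 ht2
      exact ⟨ht1, ht2⟩
    filter_upwards [ae_restrict_mem measurableSet_Icc, hne] with t htmem htne
    have htI : t ∈ Set.Ioo a b :=
      ⟨lt_of_le_of_ne htmem.1 (Ne.symm htne.1), lt_of_le_of_ne htmem.2 htne.2⟩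
    exact key t htI
  calc 1 / (b - a) * |∫ t in a..b, (f x - f t)|
      ≤ 1 / (b - a) * ∫ t in a..b, |f x - f t| := by
        apply mul_le_mul_of_nonneg_left _ (by positivity)
        exact intervalIntegral.abs_integral_le_integral_abs hab.le
    _ ≤ 1 / (b - a) * ∫ t in a..b, M * |x - t| ^ p / p := by
        apply mul_le_mul_of_nonneg_left _ (by positivity)
        exact intervalIntegral.integral_mono_ae_restrict hab.le hInt_abs hInt_g hae
    _ = 1 / (p * (p + 1) * (b - a)) * ((x - a) ^ (p + 1) + (b - x) ^ (p + 1)) * M := by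
        rw [intervalIntegral.integral_div, intervalIntegral.integral_const_mul, hIab]
        field_simp
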